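/- Let ℓ: R^{m×n} → R be differentiable with L-Lipschitz gradient, and let S be a random-k sketching matrix. Then E_S[ℓ(W_0 + B S A)] − ℓ(W_0 + B A) ≤ (L/2) · (r/k − 1) · ‖B‖_F^2 ‖A‖_F^2. -/

import Mathlib

open Matrix

attribute [local instance] Matrix.frobeniusNormedAddCommGroup Matrix.frobeniusNormedSpace



lemma descent_lemma {E : Type*} [NormedAddCommGroup E] [NormedSpace ℝ E]
    (L : ℝ) (f : E → ℝ) (hdiff : Differentiable ℝ f)
    (hLip : ∀ X Y, ‖fderiv ℝ f X - fderiv ℝ f Y‖ ≤ L * ‖X - Y‖)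
    (X H : E) : f (X + H) ≤ f X + fderiv ℝ f X H + L / 2 * ‖H‖ ^ 2 := by
  -- continuity of the derivative
  have hc : Continuous fun x => fderiv ℝ f x := by
    refine (LipschitzWith.of_dist_le_mul (K := (max L 0).toNNReal) fun x y => ?_).continuous
    rw [dist_eq_norm, dist_eq_norm]
    calc ‖fderiv ℝ f x - fderiv ℝ f y‖ ≤ L * ‖x - y‖ := hLip x y
      _ ≤ (max L 0).toNNReal * ‖x - y‖ := by
          have : (((max L 0).toNNReal : ℝ)) = max L 0 := Real.coe_toNNReal _ (le_max_right _ _)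
          rw [this]
          exact mul_le_mul_of_nonneg_right (le_max_left _ _) (norm_nonneg _)
  set φ : ℝ → ℝ := fun t => fderiv ℝ f (X + t • H) H with hφdef
  have hφc : Continuous φ := by
    apply Continuous.clm_apply _ continuous_const
    exact hc.comp (continuous_const.add (continuous_id.smul continuous_const))
  have hderiv : ∀ t : ℝ, HasDerivAt (fun s => f (X + s • H)) (φ t) t := by
    intro t
    have h1 : HasDerivAt (fun s : ℝ => X + s • H) H t := by
      simpa using ((hasDerivAt_id t).smul_const H).const_add X
    exact (hdiff (X + t • H)).hasFDerivAt.comp_hasDerivAt t h1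
  have hint : f (X + H) - f X = ∫ t in (0:ℝ)..1, φ t := by
    have := intervalIntegral.integral_eq_sub_of_hasDerivAt
      (f := fun s => f (X + s • H)) (f' := φ)
      (fun t _ => hderiv t) (hφc.intervalIntegrable 0 1)
    simpa using this.symm
  have hbound : ∀ t ∈ Set.Icc (0:ℝ) 1, φ t ≤ fderiv ℝ f X H + (L * ‖H‖ ^ 2) * t := by
    intro t ht
    have h1 : φ t - fderiv ℝ f X H = (fderiv ℝ f (X + t • H) - fderiv ℝ f X) H := by
      simp [hφdef]
    have h2 : (fderiv ℝ f (X + t • H) - fderiv ℝ f X) H ≤ L * ‖t • H‖ * ‖H‖ := by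
      calc (fderiv ℝ f (X + t • H) - fderiv ℝ f X) H
          ≤ ‖(fderiv ℝ f (X + t • H) - fderiv ℝ f X) H‖ := le_abs_self _
        _ ≤ ‖fderiv ℝ f (X + t • H) - fderiv ℝ f X‖ * ‖H‖ :=
            ContinuousLinearMap.le_opNorm _ _
        _ ≤ (L * ‖X + t • H - X‖) * ‖H‖ :=
            mul_le_mul_of_nonneg_right (hLip _ _) (norm_nonneg _)
        _ = L * ‖t • H‖ * ‖H‖ := by congr 2; simp
    have h3 : ‖t • H‖ = t * ‖H‖ := by
      rw [norm_smul, Real.norm_eq_abs, abs_of_nonneg ht.1]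
    rw [h3] at h2
    have h4 : L * (t * ‖H‖) * ‖H‖ = L * ‖H‖ ^ 2 * t := by ring
    linarith
  have hintle : (∫ t in (0:ℝ)..1, φ t) ≤
      ∫ t in (0:ℝ)..1, (fderiv ℝ f X H + (L * ‖H‖ ^ 2) * t) := by
    apply intervalIntegral.integral_mono_on zero_le_one (hφc.intervalIntegrable 0 1)
    · exact (Continuous.intervalIntegrable (by continuity) 0 1)
    · exact hbound
  have hval : (∫ t in (0:ℝ)..1, (fderiv ℝ f X H + (L * ‖H‖ ^ 2) * t))
      = fderiv ℝ f X H + L / 2 * ‖H‖ ^ 2 := by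
    rw [intervalIntegral.integral_add (intervalIntegrable_const)
      ((Continuous.intervalIntegrable (by continuity) 0 1)),
      intervalIntegral.integral_const_mul, integral_id]
    simp; ring
  linarith [hint, hintle, hval.le, hintle.trans hval.le]

/-- The random-`k` sketching matrix associated with an index set `I ⊆ {1,…,r}`. -/
noncomputable def sketch {r : ℕ} (k : ℕ) (I : Finset (Fin r)) : Matrix (Fin r) (Fin r) ℝ :=
  Matrix.diagonal (fun j => if j ∈ I then (r : ℝ) / k else 0)

lemma frob_sq {p q : Type*} [Fintype p] [Fintype q] (M : Matrix p q ℝ) :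
    ‖M‖ ^ 2 = ∑ i, ∑ j, (M i j) ^ 2 := by
  rw [frobenius_norm_def]
  rw [← Real.rpow_natCast ((∑ i, ∑ j, ‖M i j‖ ^ (2:ℝ)) ^ ((1:ℝ)/2)) 2]
  rw [← Real.rpow_mul (by positivity)]
  norm_num [Real.rpow_two, sq_abs]

lemma count_mem {r k : ℕ} (hk : 1 ≤ k) (j : Fin r) :
    (((Finset.univ : Finset (Fin r)).powersetCard k).filter (fun I => j ∈ I)).card
      = (r - 1).choose (k - 1) := by
  have := Finset.card_bij' (s := ((Finset.univ : Finset (Fin r)).powersetCard k).filter (fun I => j ∈ I))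
    (t := ((Finset.univ.erase j).powersetCard (k - 1)))
    (i := fun I _ => I.erase j) (j := fun J _ => insert j J)
    (hi := ?_) (hj := ?_) (left_inv := ?_) (right_inv := ?_)
  · rw [this, Finset.card_powersetCard, Finset.card_erase_of_mem (Finset.mem_univ j),
      Finset.card_univ, Fintype.card_fin]
  · intro I hI
    simp only [Finset.mem_filter, Finset.mem_powersetCard] at hI
    simp only [Finset.mem_powersetCard]
    constructor
    · intro x hx
      simp only [Finset.mem_erase] at hx ⊢
      exact ⟨hx.1, Finset.mem_univ x⟩
    · rw [Finset.card_erase_of_mem hI.2, hI.1.2]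
  · intro J hJ
    simp only [Finset.mem_powersetCard] at hJ
    have hjJ : j ∉ J := fun h => (Finset.mem_erase.mp (hJ.1 h)).1 rfl
    simp only [Finset.mem_filter, Finset.mem_powersetCard]
    refine ⟨⟨Finset.subset_univ _, ?_⟩, Finset.mem_insert_self _ _⟩
    rw [Finset.card_insert_of_notMem hjJ, hJ.2]
    omega
  · intro I hI
    simp only [Finset.mem_filter] at hI
    exact Finset.insert_erase hI.2
  · intro J hJ
    simp only [Finset.mem_powersetCard] at hJ
    have hjJ : j ∉ J := fun h => (Finset.mem_erase.mp (hJ.1 h)).1 rfl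
    exact Finset.erase_insert hjJ

-- key natural-number identity
lemma choose_identity {r k : ℕ} (hk : 1 ≤ k) (hkr : k ≤ r) :
    (r - 1).choose (k - 1) * r = r.choose k * k := by
  have hr : 1 ≤ r := hk.trans hkr
  have := Nat.add_one_mul_choose_eq (r - 1) (k - 1)
  have h1 : r - 1 + 1 = r := by omega
  have h2 : k - 1 + 1 = k := by omega
  rw [h1, h2] at this
  rw [mul_comm]
  exact this

lemma per_entry_sum {r k : ℕ} (hk : 1 ≤ k) (hkr : k ≤ r) (j : Fin r) :
    ∑ I ∈ (Finset.univ : Finset (Fin r)).powersetCard k,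
      (if j ∈ I then (r : ℝ) / k else 0) = (r.choose k : ℝ) := by
  rw [Finset.sum_ite, Finset.sum_const, Finset.sum_const_zero, add_zero, count_mem hk,
    nsmul_eq_mul]
  have hr : 1 ≤ r := hk.trans hkr
  have hid := choose_identity hk hkr
  have hkne : (k:ℝ) ≠ 0 := Nat.cast_ne_zero.mpr (by omega)
  have hrne : (r:ℝ) ≠ 0 := Nat.cast_ne_zero.mpr (by omega)
  have : ((r - 1).choose (k - 1) : ℝ) * r = (r.choose k : ℝ) * k := by
    exact_mod_cast congrArg (Nat.cast : ℕ → ℝ) hid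
  field_simp
  linarith [this]

lemma per_entry_sq_sum {r k : ℕ} (hk : 1 ≤ k) (hkr : k ≤ r) (j : Fin r) :
    ∑ I ∈ (Finset.univ : Finset (Fin r)).powersetCard k,
      ((if j ∈ I then (r : ℝ) / k else 0) - 1) ^ 2
      = (r.choose k : ℝ) * ((r : ℝ) / k - 1) := by
  have h1 : ∀ I : Finset (Fin r),
      ((if j ∈ I then (r : ℝ) / k else 0) - 1) ^ 2
      = if j ∈ I then ((r : ℝ)/k - 1)^2 else 1 := by
    intro I; split <;> norm_num
  simp_rw [h1]
  rw [Finset.sum_ite, Finset.sum_const, Finset.sum_const, count_mem hk, nsmul_eq_mul, nsmul_eq_mul,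
    mul_one]
  rw [Finset.filter_not, Finset.card_sdiff_of_subset (Finset.filter_subset _ _), count_mem hk,
    Finset.card_powersetCard, Finset.card_univ, Fintype.card_fin]
  have hr : 1 ≤ r := hk.trans hkr
  have hid := choose_identity hk hkr
  have hcle : (r-1).choose (k-1) ≤ r.choose k := by
    have h1 : (r-1).choose (k-1) * r ≤ r.choose k * r := by
      calc (r-1).choose (k-1) * r = r.choose k * k := hid
      _ ≤ r.choose k * r := Nat.mul_le_mul_left _ hkr
    exact Nat.le_of_mul_le_mul_right h1 (by omega)
  have hidR : ((r - 1).choose (k - 1) : ℝ) * r = (r.choose k : ℝ) * k := by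
    exact_mod_cast congrArg (Nat.cast : ℕ → ℝ) hid
  have hkne : (k:ℝ) ≠ 0 := Nat.cast_ne_zero.mpr (by omega)
  have hrne : (r:ℝ) ≠ 0 := Nat.cast_ne_zero.mpr (by omega)
  rw [Nat.cast_sub hcle]
  field_simp
  ring_nf
  nlinarith [hidR, sq_nonneg ((r:ℝ) - k)]

lemma sum_sketch {r k : ℕ} (hk : 1 ≤ k) (hkr : k ≤ r) :
    ∑ I ∈ (Finset.univ : Finset (Fin r)).powersetCard k, sketch k I
      = (r.choose k : ℝ) • (1 : Matrix (Fin r) (Fin r) ℝ) := by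
  ext i j
  rw [Matrix.sum_apply]
  rcases eq_or_ne i j with h | h
  · subst h
    rw [show ((r.choose k : ℝ) • (1 : Matrix (Fin r) (Fin r) ℝ)) i i = (r.choose k : ℝ) by
      simp [Matrix.smul_apply, Matrix.one_apply_eq]]
    rw [← per_entry_sum hk hkr i]
    exact Finset.sum_congr rfl fun I _ => by simp [sketch]
  · simp [sketch, Matrix.diagonal_apply_ne _ h, Matrix.smul_apply, Matrix.one_apply_ne h]

lemma sum_sq {r k n : ℕ} (hk : 1 ≤ k) (hkr : k ≤ r) (A : Matrix (Fin r) (Fin n) ℝ) :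
    ∑ I ∈ (Finset.univ : Finset (Fin r)).powersetCard k, ‖(sketch k I - 1) * A‖ ^ 2
      = (r.choose k : ℝ) * ((r : ℝ) / k - 1) * ‖A‖ ^ 2 := by
  have h1 : ∀ I : Finset (Fin r), ‖(sketch k I - 1) * A‖ ^ 2
      = ∑ j, ((if j ∈ I then (r : ℝ) / k else 0) - 1) ^ 2 * ∑ l, (A j l) ^ 2 := by
    intro I
    rw [frob_sq]
    refine Finset.sum_congr rfl fun j _ => ?_
    rw [Finset.mul_sum]
    refine Finset.sum_congr rfl fun l _ => ?_
    have he : (((sketch k I - 1) * A : Matrix (Fin r) (Fin n) ℝ)) j l = ((if j ∈ I then (r : ℝ) / k else 0) - 1) * A j l := by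
      rw [Matrix.sub_mul, Matrix.one_mul, Matrix.sub_apply, sketch, Matrix.diagonal_mul]
      ring
    rw [he, mul_pow]
  simp_rw [h1]
  rw [Finset.sum_comm]
  have h2 : ∀ j : Fin r,
      ∑ I ∈ (Finset.univ : Finset (Fin r)).powersetCard k,
        ((if j ∈ I then (r : ℝ) / k else 0) - 1) ^ 2 * ∑ l, (A j l) ^ 2
      = (r.choose k : ℝ) * ((r : ℝ) / k - 1) * ∑ l, (A j l) ^ 2 := by
    intro j
    rw [← Finset.sum_mul, per_entry_sq_sum hk hkr j]
  simp_rw [h2]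
  rw [← Finset.mul_sum, frob_sq]


/-- If `ℓ : ℝ^{m×n} → ℝ` is differentiable with `L`-Lipschitz gradient
(in Frobenius norm) and `S` is a random-`k` sketching matrix, then
`E_S[ℓ(W₀ + B S A)] − ℓ(W₀ + B A) ≤ (L/2)·(r/k − 1)·‖B‖_F² ‖A‖_F²`. -/
theorem sketched_loss_approximation_error (m n r k : ℕ) (hk : 1 ≤ k) (hkr : k ≤ r)
    (L : ℝ) (ℓ : Matrix (Fin m) (Fin n) ℝ → ℝ)
    (hdiff : Differentiable ℝ ℓ)
    (hLip : ∀ X Y, @norm (Matrix (Fin m) (Fin n) ℝ →L[ℝ] ℝ) ContinuousLinearMap.hasOpNorm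
      (fderiv ℝ ℓ X - fderiv ℝ ℓ Y) ≤ L * ‖X - Y‖)
    (W₀ : Matrix (Fin m) (Fin n) ℝ)
    (B : Matrix (Fin m) (Fin r) ℝ) (A : Matrix (Fin r) (Fin n) ℝ) :
    (((Finset.univ : Finset (Fin r)).powersetCard k).card : ℝ)⁻¹ *
        ∑ I ∈ (Finset.univ : Finset (Fin r)).powersetCard k, ℓ (W₀ + B * sketch k I * A)
      - ℓ (W₀ + B * A)
      ≤ L / 2 * ((r : ℝ) / k - 1) * (‖B‖ ^ 2 * ‖A‖ ^ 2) := by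
  classical
  set P := (Finset.univ : Finset (Fin r)).powersetCard k with hP
  set N : ℕ := P.card with hN
  have hNchoose : N = r.choose k := by
    rw [hN, hP, Finset.card_powersetCard, Finset.card_univ, Fintype.card_fin]
  have hNpos : 0 < N := by rw [hNchoose]; exact Nat.choose_pos hkr
  have hNR : (0:ℝ) < (N:ℝ) := Nat.cast_pos.mpr hNpos
  have hNne : (N:ℝ) ≠ 0 := ne_of_gt hNR
  by_cases hL : 0 ≤ L
  · -- main case
    set X := W₀ + B * A with hX
    have hargs : ∀ I : Finset (Fin r),
        W₀ + B * sketch k I * A = X + B * ((sketch k I - 1) * A) := by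
      intro I
      have h1 : B * ((sketch k I - 1) * A) = B * sketch k I * A - B * A := by
        rw [Matrix.sub_mul, Matrix.one_mul, Matrix.mul_sub, ← Matrix.mul_assoc]
      rw [h1, hX]
      abel
    have hzero : ∑ I ∈ P, B * ((sketch k I - 1) * A) = 0 := by
      rw [← Matrix.mul_sum, ← Matrix.sum_mul]
      have hs : ∑ I ∈ P, (sketch k I - 1) = 0 := by
        rw [Finset.sum_sub_distrib, hP, sum_sketch hk hkr, Finset.sum_const]
        rw [← hP, ← hN, hNchoose]
        simp [Nat.cast_smul_eq_nsmul ℝ]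
      rw [hs, Matrix.zero_mul, Matrix.mul_zero]
    have hnormsum : ∑ I ∈ P, ‖B * ((sketch k I - 1) * A)‖ ^ 2
        ≤ (N:ℝ) * ((r:ℝ)/k - 1) * (‖B‖^2 * ‖A‖^2) := by
      calc ∑ I ∈ P, ‖B * ((sketch k I - 1) * A)‖ ^ 2
          ≤ ∑ I ∈ P, ‖B‖^2 * ‖(sketch k I - 1) * A‖^2 := by
            refine Finset.sum_le_sum fun I _ => ?_
            have h1 := Matrix.frobenius_norm_mul B ((sketch k I - 1) * A)
            nlinarith [norm_nonneg (B * ((sketch k I - 1) * A)), norm_nonneg B,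
              norm_nonneg ((sketch k I - 1) * A)]
        _ = ‖B‖^2 * ∑ I ∈ P, ‖(sketch k I - 1) * A‖^2 := (Finset.mul_sum _ _ _).symm
        _ = (N:ℝ) * ((r:ℝ)/k - 1) * (‖B‖^2 * ‖A‖^2) := by
            rw [hP, sum_sq hk hkr A, ← hNchoose]; ring
    set D := fderiv ℝ ℓ X with hD
    have hsum : ∑ I ∈ P, ℓ (W₀ + B * sketch k I * A)
        ≤ (N:ℝ) * ℓ X + L/2 * ((N:ℝ) * ((r:ℝ)/k - 1) * (‖B‖^2 * ‖A‖^2)) := by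
      calc ∑ I ∈ P, ℓ (W₀ + B * sketch k I * A)
          ≤ ∑ I ∈ P, (ℓ X + D (B * ((sketch k I - 1) * A))
              + L/2 * ‖B * ((sketch k I - 1) * A)‖^2) := by
            refine Finset.sum_le_sum fun I _ => ?_
            rw [hargs I]
            exact descent_lemma L ℓ hdiff hLip X _
        _ = (N:ℝ) * ℓ X + D (∑ I ∈ P, B * ((sketch k I - 1) * A))
              + L/2 * ∑ I ∈ P, ‖B * ((sketch k I - 1) * A)‖^2 := by
            rw [Finset.sum_add_distrib, Finset.sum_add_distrib, Finset.sum_const,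
              nsmul_eq_mul, map_sum, ← Finset.mul_sum]
        _ = (N:ℝ) * ℓ X + L/2 * ∑ I ∈ P, ‖B * ((sketch k I - 1) * A)‖^2 := by
            rw [hzero, map_zero, add_zero]
        _ ≤ (N:ℝ) * ℓ X + L/2 * ((N:ℝ) * ((r:ℝ)/k - 1) * (‖B‖^2 * ‖A‖^2)) := by
            have := mul_le_mul_of_nonneg_left hnormsum (by linarith : (0:ℝ) ≤ L/2)
            linarith
    have hmul := mul_le_mul_of_nonneg_left hsum (inv_nonneg.mpr hNR.le)
    have hrhs : (N:ℝ)⁻¹ * ((N:ℝ) * ℓ X + L/2 * ((N:ℝ) * ((r:ℝ)/k - 1) * (‖B‖^2 * ‖A‖^2)))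
        = ℓ X + L/2 * ((r:ℝ)/k - 1) * (‖B‖^2 * ‖A‖^2) := by
      field_simp
    rw [hrhs] at hmul
    linarith
  · -- degenerate case: the matrix space is trivial
    push_neg at hL
    have hsub : ∀ (U V : Matrix (Fin m) (Fin n) ℝ), U = V := by
      intro U V
      by_contra hne
      have h1 : 0 < ‖U - V‖ := by rwa [norm_pos_iff, sub_ne_zero]
      have h2 := hLip U V
      have h3 : 0 ≤ L * ‖U - V‖ :=
        (ContinuousLinearMap.opNorm_nonneg (fderiv ℝ ℓ U - fderiv ℝ ℓ V)).trans h2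
      nlinarith [h3, h1, hL]
    have hsumconst : ∑ I ∈ P, ℓ (W₀ + B * sketch k I * A) = (N:ℝ) * ℓ (W₀ + B * A) := by
      rw [Finset.sum_congr rfl (fun I _ => congrArg ℓ (hsub _ _)), Finset.sum_const,
        nsmul_eq_mul]
    rw [hsumconst, ← mul_assoc, inv_mul_cancel₀ hNne, one_mul, sub_self]
    have hmn : m = 0 ∨ n = 0 := by
      by_contra hcon
      push_neg at hcon
      obtain ⟨hm, hn⟩ := hcon
      have hU : (Matrix.of fun _ _ => (1:ℝ) : Matrix (Fin m) (Fin n) ℝ) = 0 := hsub _ _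
      have := congrFun (congrFun hU ⟨0, Nat.pos_of_ne_zero hm⟩) ⟨0, Nat.pos_of_ne_zero hn⟩
      simp [Matrix.zero_apply] at this
    rcases hmn with h | h
    · subst h
      have hB : B = 0 := by ext i j; exact i.elim0
      rw [hB, norm_zero]
      simp
    · subst h
      have hA : A = 0 := by ext i j; exact j.elim0
      rw [hA, norm_zero]
      simp
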